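/- arXiv:math/9803080 — 2 statements merged into one kernel-verified Lean document; each statement's English description precedes it below -/
import Mathlib

section
/- The space of vectors in (ℂ²)^{⊗3} annihilated by the spin-representation image of the explicitly given 14-dimensional Lie algebra g₂ ⊂ so(7) is exactly one-dimensional, spanned by φ = u(1,1,1) + i·u(-1,-1,-1). -/
open Complex Matrix BigOperators

noncomputable section

/-- The 2×2 identity matrix `E`. -/
def E2 : Matrix (Fin 2) (Fin 2) ℂ := 1

/-- The matrix `T = [[0,-i],[i,0]]`. -/
def Tm : Matrix (Fin 2) (Fin 2) ℂ := !![0, -Complex.I; Complex.I, 0]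

/-- The matrix `U = diag(i,-i)`. -/
def Um : Matrix (Fin 2) (Fin 2) ℂ := !![Complex.I, 0; 0, -Complex.I]

/-- The matrix `V = [[0,i],[i,0]]`. -/
def Vm : Matrix (Fin 2) (Fin 2) ℂ := !![0, Complex.I; Complex.I, 0]

/-- The vector `u(ε) = (1/√2)·(1, -ε·i) ∈ ℂ²`. -/
def uvec (ε : ℂ) : Fin 2 → ℂ := ((Real.sqrt 2 : ℂ))⁻¹ • ![1, -ε * Complex.I]

/-- The basis vector `u(ε_m, …, ε_1) = u(ε_m) ⊗ ⋯ ⊗ u(ε_1)` of `Δ = (ℂ²)^{⊗ m}`,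
realized as a function on multi-indices; the index `i = 0` corresponds to the rightmost
tensor factor (i.e. to `ε_1`). -/
def uB {m : ℕ} (ε : Fin m → ℂ) : (Fin m → Fin 2) → ℂ :=
  fun x => ∏ i, uvec (ε i) (x i)

/-- The `m`-fold Kronecker (tensor) product of 2×2 matrices, as a matrix acting on
`(ℂ²)^{⊗ m}`; the factor `i = 0` is the rightmost one. -/
def tensM {m : ℕ} (M : Fin m → Matrix (Fin 2) (Fin 2) ℂ) :
    Matrix (Fin m → Fin 2) (Fin m → Fin 2) ℂ :=
  Matrix.of fun x y => ∏ i, M i (x i) (y i)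

/-- The Clifford representation `Φ` in even dimension `n = 2m` with signs `κ`:
`Φ(e_{2k-1}) = τ_{2k-1}·E^{⊗(m-k)} ⊗ U ⊗ T^{⊗(k-1)}`,
`Φ(e_{2k})   = τ_{2k}·E^{⊗(m-k)} ⊗ V ⊗ T^{⊗(k-1)}`,
where `τ_j = i` if `κ_j = -1` and `τ_j = 1` if `κ_j = 1`.
Here `j : Fin (2*m)` is the zero-based index, so `j` corresponds to `e_{j+1}`. -/
def PhiEven (m : ℕ) (κ : Fin (2*m) → ℂ) (j : Fin (2*m)) :
    Matrix (Fin m → Fin 2) (Fin m → Fin 2) ℂ :=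
  (if κ j = -1 then Complex.I else 1) •
    tensM (fun i => if (i : ℕ) < (j : ℕ)/2 then Tm
      else if (i : ℕ) = (j : ℕ)/2 then (if (j : ℕ) % 2 = 0 then Um else Vm) else E2)

/-- `Δ⁺`: span of the basis vectors `u(ε_m,…,ε_1)` with `∏ ε_j = 1`. -/
def Dplus (m : ℕ) : Submodule ℂ ((Fin m → Fin 2) → ℂ) :=
  Submodule.span ℂ
    {v | ∃ ε : Fin m → ℂ, (∀ j, ε j = 1 ∨ ε j = -1) ∧ (∏ j, ε j) = 1 ∧ v = uB ε}

/-- `Δ⁻`: span of the basis vectors `u(ε_m,…,ε_1)` with `∏ ε_j = -1`. -/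
def Dminus (m : ℕ) : Submodule ℂ ((Fin m → Fin 2) → ℂ) :=
  Submodule.span ℂ
    {v | ∃ ε : Fin m → ℂ, (∀ j, ε j = 1 ∨ ε j = -1) ∧ (∏ j, ε j) = -1 ∧ v = uB ε}

/-- The odd-dimensional Clifford representation Φ of Cl(7) on (ℂ²)^{⊗3} (first component
of the odd-dimensional construction, all κ_j = 1): Φ(e_k) = Φ₆(e_k) for k ≤ 6 and
Φ(e_7) = i·T⊗T⊗T. Indices are zero-based. -/
def Phi7 (j : Fin 7) : Matrix (Fin 3 → Fin 2) (Fin 3 → Fin 2) ℂ :=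
  if h : (j : ℕ) < 6 then PhiEven 3 (fun _ => 1) ⟨(j : ℕ), by omega⟩
  else Complex.I • tensM (fun _ => Tm)

/-- ρ(E_{ij}) = (1/2)·Φ(e_i)·Φ(e_j), zero-based indices. -/
def rho7 (i j : Fin 7) : Matrix (Fin 3 → Fin 2) (Fin 3 → Fin 2) ℂ :=
  (2⁻¹ : ℂ) • (Phi7 i * Phi7 j)

/-- The spin-representation images of the 14 spanning elements of g₂ ⊂ so(7):
E₁₂-E₃₄, E₁₂-E₅₆, E₁₃+E₂₄, E₁₃-E₆₇, E₁₄-E₂₃, E₁₄-E₅₇, E₁₅+E₂₆, E₁₅+E₄₇, E₁₆-E₂₅,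
E₁₆+E₃₇, E₁₇-E₃₆, E₁₇-E₄₅, E₂₇-E₃₅, E₂₇+E₄₆ (translated to zero-based indices). -/
def g2ops : List (Matrix (Fin 3 → Fin 2) (Fin 3 → Fin 2) ℂ) :=
  [rho7 0 1 - rho7 2 3, rho7 0 1 - rho7 4 5, rho7 0 2 + rho7 1 3, rho7 0 2 - rho7 5 6,
   rho7 0 3 - rho7 1 2, rho7 0 3 - rho7 4 6, rho7 0 4 + rho7 1 5, rho7 0 4 + rho7 3 6,
   rho7 0 5 - rho7 1 4, rho7 0 5 + rho7 2 6, rho7 0 6 - rho7 2 5, rho7 0 6 - rho7 3 4,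
   rho7 1 6 - rho7 2 4, rho7 1 6 + rho7 3 5]

/-- The spinor φ = u(1,1,1) + i·u(-1,-1,-1) ∈ (ℂ²)^{⊗3}. -/
def phiG2 : (Fin 3 → Fin 2) → ℂ :=
  uB (fun _ => (1 : ℂ)) + Complex.I • uB (fun _ => (-1 : ℂ))


-- ===== auxiliary material =====

lemma sum8 (f : (Fin 3 → Fin 2) → ℂ) : ∑ y, f y =
    f ![0,0,0] + f ![0,0,1] + f ![0,1,0] + f ![0,1,1] +
    f ![1,0,0] + f ![1,0,1] + f ![1,1,0] + f ![1,1,1] := by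
  rw [show (Finset.univ : Finset (Fin 3 → Fin 2)) =
    {![0,0,0], ![0,0,1], ![0,1,0], ![0,1,1], ![1,0,0], ![1,0,1], ![1,1,0], ![1,1,1]} from by decide]
  repeat rw [Finset.sum_insert (by decide)]
  rw [Finset.sum_singleton]; ring

lemma tensM_mul {m : ℕ} (M N : Fin m → Matrix (Fin 2) (Fin 2) ℂ) :
    tensM M * tensM N = tensM (fun i => M i * N i) := by
  ext x y
  simp only [tensM, Matrix.mul_apply, Matrix.of_apply]
  rw [Finset.prod_univ_sum, Fintype.piFinset_univ]
  exact Finset.sum_congr rfl fun z _ => (Finset.prod_mul_distrib).symm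

lemma Phi7_0 : Phi7 0 = tensM ![Um, E2, E2] := by
  rw [Phi7, dif_pos (by decide), PhiEven, if_neg (by norm_num), one_smul]; congr 1
  funext i; fin_cases i <;> rfl
lemma Phi7_1 : Phi7 1 = tensM ![Vm, E2, E2] := by
  rw [Phi7, dif_pos (by decide), PhiEven, if_neg (by norm_num), one_smul]; congr 1
  funext i; fin_cases i <;> rfl
lemma Phi7_2 : Phi7 2 = tensM ![Tm, Um, E2] := by
  rw [Phi7, dif_pos (by decide), PhiEven, if_neg (by norm_num), one_smul]; congr 1
  funext i; fin_cases i <;> rfl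
lemma Phi7_3 : Phi7 3 = tensM ![Tm, Vm, E2] := by
  rw [Phi7, dif_pos (by decide), PhiEven, if_neg (by norm_num), one_smul]; congr 1
  funext i; fin_cases i <;> rfl
lemma Phi7_4 : Phi7 4 = tensM ![Tm, Tm, Um] := by
  rw [Phi7, dif_pos (by decide), PhiEven, if_neg (by norm_num), one_smul]; congr 1
  funext i; fin_cases i <;> rfl
lemma Phi7_5 : Phi7 5 = tensM ![Tm, Tm, Vm] := by
  rw [Phi7, dif_pos (by decide), PhiEven, if_neg (by norm_num), one_smul]; congr 1
  funext i; fin_cases i <;> rfl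
lemma Phi7_6 : Phi7 6 = Complex.I • tensM ![Tm, Tm, Tm] := by
  rw [Phi7, dif_neg (by decide)]; congr 1

def Qm : Matrix (Fin 2) (Fin 2) ℂ := !![0,-1;1,0]
def Xm : Matrix (Fin 2) (Fin 2) ℂ := !![0,1;1,0]
def Nm : Matrix (Fin 2) (Fin 2) ℂ := !![-1,0;0,1]

lemma mTT : Tm * Tm = 1 := by
  ext i j; fin_cases i <;> fin_cases j <;>
    simp [Tm, Matrix.mul_apply, Fin.sum_univ_two, Matrix.one_apply] <;> ring_nf <;>
    simp [Complex.I_sq]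
lemma mUV : Um * Vm = Qm := by
  ext i j; fin_cases i <;> fin_cases j <;>
    simp [Um, Vm, Qm, Matrix.mul_apply, Fin.sum_univ_two] <;> ring_nf <;>
    simp [Complex.I_sq]
lemma mUT : Um * Tm = Xm := by
  ext i j; fin_cases i <;> fin_cases j <;>
    simp [Um, Tm, Xm, Matrix.mul_apply, Fin.sum_univ_two] <;> ring_nf <;>
    simp [Complex.I_sq]
lemma mVT : Vm * Tm = Nm := by
  ext i j; fin_cases i <;> fin_cases j <;>
    simp [Vm, Tm, Nm, Matrix.mul_apply, Fin.sum_univ_two] <;> ring_nf <;>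
    simp [Complex.I_sq]

/-- The sign vector: +1 on (0,0,0) and (1,1,1), -1 elsewhere. -/
def Sg : (Fin 3 → Fin 2) → ℂ := fun x => if x 0 = x 1 ∧ x 1 = x 2 then 1 else -1

lemma tensM_congr {m : ℕ} {f g : Fin m → Matrix (Fin 2) (Fin 2) ℂ}
    (h : ∀ k, f k = g k) : tensM f = tensM g := congrArg tensM (funext h)

lemma funext32 {f g : (Fin 3 → Fin 2) → ℂ}
    (h : ∀ a b c : Fin 2, f ![a,b,c] = g ![a,b,c]) : f = g := by
  funext x
  have hx : x = ![x 0, x 1, x 2] := by funext i; fin_cases i <;> rfl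
  rw [hx]; exact h _ _ _

lemma r01 : rho7 0 1 = (2⁻¹:ℂ) • tensM ![Qm, (1 : Matrix (Fin 2) (Fin 2) ℂ), (1 : Matrix (Fin 2) (Fin 2) ℂ)] := by
  rw [rho7, Phi7_0, Phi7_1, tensM_mul]
  exact congrArg _ (tensM_congr fun k => by fin_cases k <;> simp [mTT, mUV, mUT, mVT, E2])

lemma r23 : rho7 2 3 = (2⁻¹:ℂ) • tensM ![(1 : Matrix (Fin 2) (Fin 2) ℂ), Qm, (1 : Matrix (Fin 2) (Fin 2) ℂ)] := by
  rw [rho7, Phi7_2, Phi7_3, tensM_mul]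
  exact congrArg _ (tensM_congr fun k => by fin_cases k <;> simp [mTT, mUV, mUT, mVT, E2])

lemma r45 : rho7 4 5 = (2⁻¹:ℂ) • tensM ![(1 : Matrix (Fin 2) (Fin 2) ℂ), (1 : Matrix (Fin 2) (Fin 2) ℂ), Qm] := by
  rw [rho7, Phi7_4, Phi7_5, tensM_mul]
  exact congrArg _ (tensM_congr fun k => by fin_cases k <;> simp [mTT, mUV, mUT, mVT, E2])

lemma r02 : rho7 0 2 = (2⁻¹:ℂ) • tensM ![Xm, Um, (1 : Matrix (Fin 2) (Fin 2) ℂ)] := by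
  rw [rho7, Phi7_0, Phi7_2, tensM_mul]
  exact congrArg _ (tensM_congr fun k => by fin_cases k <;> simp [mTT, mUV, mUT, mVT, E2])

lemma r13 : rho7 1 3 = (2⁻¹:ℂ) • tensM ![Nm, Vm, (1 : Matrix (Fin 2) (Fin 2) ℂ)] := by
  rw [rho7, Phi7_1, Phi7_3, tensM_mul]
  exact congrArg _ (tensM_congr fun k => by fin_cases k <;> simp [mTT, mUV, mUT, mVT, E2])

lemma r56 : rho7 5 6 = (2⁻¹*Complex.I:ℂ) • tensM ![(1 : Matrix (Fin 2) (Fin 2) ℂ), (1 : Matrix (Fin 2) (Fin 2) ℂ), Nm] := by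
  rw [rho7, Phi7_5, Phi7_6, Matrix.mul_smul, tensM_mul, smul_smul]
  exact congrArg _ (tensM_congr fun k => by fin_cases k <;> simp [mTT, mUV, mUT, mVT, E2])

lemma r03 : rho7 0 3 = (2⁻¹:ℂ) • tensM ![Xm, Vm, (1 : Matrix (Fin 2) (Fin 2) ℂ)] := by
  rw [rho7, Phi7_0, Phi7_3, tensM_mul]
  exact congrArg _ (tensM_congr fun k => by fin_cases k <;> simp [mTT, mUV, mUT, mVT, E2])

lemma r12 : rho7 1 2 = (2⁻¹:ℂ) • tensM ![Nm, Um, (1 : Matrix (Fin 2) (Fin 2) ℂ)] := by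
  rw [rho7, Phi7_1, Phi7_2, tensM_mul]
  exact congrArg _ (tensM_congr fun k => by fin_cases k <;> simp [mTT, mUV, mUT, mVT, E2])

lemma r46 : rho7 4 6 = (2⁻¹*Complex.I:ℂ) • tensM ![(1 : Matrix (Fin 2) (Fin 2) ℂ), (1 : Matrix (Fin 2) (Fin 2) ℂ), Xm] := by
  rw [rho7, Phi7_4, Phi7_6, Matrix.mul_smul, tensM_mul, smul_smul]
  exact congrArg _ (tensM_congr fun k => by fin_cases k <;> simp [mTT, mUV, mUT, mVT, E2])

lemma r04 : rho7 0 4 = (2⁻¹:ℂ) • tensM ![Xm, Tm, Um] := by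
  rw [rho7, Phi7_0, Phi7_4, tensM_mul]
  exact congrArg _ (tensM_congr fun k => by fin_cases k <;> simp [mTT, mUV, mUT, mVT, E2])

lemma r15 : rho7 1 5 = (2⁻¹:ℂ) • tensM ![Nm, Tm, Vm] := by
  rw [rho7, Phi7_1, Phi7_5, tensM_mul]
  exact congrArg _ (tensM_congr fun k => by fin_cases k <;> simp [mTT, mUV, mUT, mVT, E2])

lemma r36 : rho7 3 6 = (2⁻¹*Complex.I:ℂ) • tensM ![(1 : Matrix (Fin 2) (Fin 2) ℂ), Nm, Tm] := by
  rw [rho7, Phi7_3, Phi7_6, Matrix.mul_smul, tensM_mul, smul_smul]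
  exact congrArg _ (tensM_congr fun k => by fin_cases k <;> simp [mTT, mUV, mUT, mVT, E2])

lemma r05 : rho7 0 5 = (2⁻¹:ℂ) • tensM ![Xm, Tm, Vm] := by
  rw [rho7, Phi7_0, Phi7_5, tensM_mul]
  exact congrArg _ (tensM_congr fun k => by fin_cases k <;> simp [mTT, mUV, mUT, mVT, E2])

lemma r26 : rho7 2 6 = (2⁻¹*Complex.I:ℂ) • tensM ![(1 : Matrix (Fin 2) (Fin 2) ℂ), Xm, Tm] := by
  rw [rho7, Phi7_2, Phi7_6, Matrix.mul_smul, tensM_mul, smul_smul]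
  exact congrArg _ (tensM_congr fun k => by fin_cases k <;> simp [mTT, mUV, mUT, mVT, E2])

lemma r14 : rho7 1 4 = (2⁻¹:ℂ) • tensM ![Nm, Tm, Um] := by
  rw [rho7, Phi7_1, Phi7_4, tensM_mul]
  exact congrArg _ (tensM_congr fun k => by fin_cases k <;> simp [mTT, mUV, mUT, mVT, E2])

lemma r06 : rho7 0 6 = (2⁻¹*Complex.I:ℂ) • tensM ![Xm, Tm, Tm] := by
  rw [rho7, Phi7_0, Phi7_6, Matrix.mul_smul, tensM_mul, smul_smul]
  exact congrArg _ (tensM_congr fun k => by fin_cases k <;> simp [mTT, mUV, mUT, mVT, E2])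

lemma r25 : rho7 2 5 = (2⁻¹:ℂ) • tensM ![(1 : Matrix (Fin 2) (Fin 2) ℂ), Xm, Vm] := by
  rw [rho7, Phi7_2, Phi7_5, tensM_mul]
  exact congrArg _ (tensM_congr fun k => by fin_cases k <;> simp [mTT, mUV, mUT, mVT, E2])

lemma r34 : rho7 3 4 = (2⁻¹:ℂ) • tensM ![(1 : Matrix (Fin 2) (Fin 2) ℂ), Nm, Um] := by
  rw [rho7, Phi7_3, Phi7_4, tensM_mul]
  exact congrArg _ (tensM_congr fun k => by fin_cases k <;> simp [mTT, mUV, mUT, mVT, E2])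

lemma r16 : rho7 1 6 = (2⁻¹*Complex.I:ℂ) • tensM ![Nm, Tm, Tm] := by
  rw [rho7, Phi7_1, Phi7_6, Matrix.mul_smul, tensM_mul, smul_smul]
  exact congrArg _ (tensM_congr fun k => by fin_cases k <;> simp [mTT, mUV, mUT, mVT, E2])

lemma r24 : rho7 2 4 = (2⁻¹:ℂ) • tensM ![(1 : Matrix (Fin 2) (Fin 2) ℂ), Xm, Um] := by
  rw [rho7, Phi7_2, Phi7_4, tensM_mul]
  exact congrArg _ (tensM_congr fun k => by fin_cases k <;> simp [mTT, mUV, mUT, mVT, E2])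

lemma r35 : rho7 3 5 = (2⁻¹:ℂ) • tensM ![(1 : Matrix (Fin 2) (Fin 2) ℂ), Nm, Vm] := by
  rw [rho7, Phi7_3, Phi7_5, tensM_mul]
  exact congrArg _ (tensM_congr fun k => by fin_cases k <;> simp [mTT, mUV, mUT, mVT, E2])

lemma Sg_val : Sg ![0,0,0] = 1 ∧ Sg ![0,0,1] = -1 ∧ Sg ![0,1,0] = -1 ∧ Sg ![0,1,1] = -1 ∧
    Sg ![1,0,0] = -1 ∧ Sg ![1,0,1] = -1 ∧ Sg ![1,1,0] = -1 ∧ Sg ![1,1,1] = 1 := by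
  refine ⟨?_,?_,?_,?_,?_,?_,?_,?_⟩ <;> simp [Sg]

lemma check0 : (rho7 0 1 - rho7 2 3).mulVec Sg = 0 := by
  apply funext32; intro a b c
  fin_cases a <;> fin_cases b <;> fin_cases c <;>
    (simp only [r01, r23, Matrix.sub_mulVec, Matrix.add_mulVec, Matrix.smul_mulVec,
      Matrix.mulVec, dotProduct, sum8, tensM, Matrix.of_apply, Fin.prod_univ_three,
      Sg_val.1, Sg_val.2.1, Sg_val.2.2.1, Sg_val.2.2.2.1, Sg_val.2.2.2.2.1,
      Sg_val.2.2.2.2.2.1, Sg_val.2.2.2.2.2.2.1, Sg_val.2.2.2.2.2.2.2,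
      Matrix.cons_val_zero, Matrix.cons_val_one, Matrix.cons_val_two, Matrix.tail_cons,
      Matrix.head_cons, Qm, Xm, Nm, Tm, Um, Vm,
      Matrix.cons_val', Matrix.cons_val_fin_one, Matrix.empty_val',
      Matrix.one_apply, Pi.zero_apply, Pi.sub_apply, Pi.add_apply, smul_eq_mul] <;>
     norm_num <;> ring_nf <;> simp [Complex.I_sq] <;> ring_nf)

lemma check1 : (rho7 0 1 - rho7 4 5).mulVec Sg = 0 := by
  apply funext32; intro a b c
  fin_cases a <;> fin_cases b <;> fin_cases c <;>
    (simp only [r01, r45, Matrix.sub_mulVec, Matrix.add_mulVec, Matrix.smul_mulVec,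
      Matrix.mulVec, dotProduct, sum8, tensM, Matrix.of_apply, Fin.prod_univ_three,
      Sg_val.1, Sg_val.2.1, Sg_val.2.2.1, Sg_val.2.2.2.1, Sg_val.2.2.2.2.1,
      Sg_val.2.2.2.2.2.1, Sg_val.2.2.2.2.2.2.1, Sg_val.2.2.2.2.2.2.2,
      Matrix.cons_val_zero, Matrix.cons_val_one, Matrix.cons_val_two, Matrix.tail_cons,
      Matrix.head_cons, Qm, Xm, Nm, Tm, Um, Vm,
      Matrix.cons_val', Matrix.cons_val_fin_one, Matrix.empty_val',
      Matrix.one_apply, Pi.zero_apply, Pi.sub_apply, Pi.add_apply, smul_eq_mul] <;>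
     norm_num <;> ring_nf <;> simp [Complex.I_sq] <;> ring_nf)

lemma check2 : (rho7 0 2 + rho7 1 3).mulVec Sg = 0 := by
  apply funext32; intro a b c
  fin_cases a <;> fin_cases b <;> fin_cases c <;>
    (simp only [r02, r13, Matrix.sub_mulVec, Matrix.add_mulVec, Matrix.smul_mulVec,
      Matrix.mulVec, dotProduct, sum8, tensM, Matrix.of_apply, Fin.prod_univ_three,
      Sg_val.1, Sg_val.2.1, Sg_val.2.2.1, Sg_val.2.2.2.1, Sg_val.2.2.2.2.1,
      Sg_val.2.2.2.2.2.1, Sg_val.2.2.2.2.2.2.1, Sg_val.2.2.2.2.2.2.2,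
      Matrix.cons_val_zero, Matrix.cons_val_one, Matrix.cons_val_two, Matrix.tail_cons,
      Matrix.head_cons, Qm, Xm, Nm, Tm, Um, Vm,
      Matrix.cons_val', Matrix.cons_val_fin_one, Matrix.empty_val',
      Matrix.one_apply, Pi.zero_apply, Pi.sub_apply, Pi.add_apply, smul_eq_mul] <;>
     norm_num <;> ring_nf <;> simp [Complex.I_sq] <;> ring_nf)

lemma check3 : (rho7 0 2 - rho7 5 6).mulVec Sg = 0 := by
  apply funext32; intro a b c
  fin_cases a <;> fin_cases b <;> fin_cases c <;>
    (simp only [r02, r56, Matrix.sub_mulVec, Matrix.add_mulVec, Matrix.smul_mulVec,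
      Matrix.mulVec, dotProduct, sum8, tensM, Matrix.of_apply, Fin.prod_univ_three,
      Sg_val.1, Sg_val.2.1, Sg_val.2.2.1, Sg_val.2.2.2.1, Sg_val.2.2.2.2.1,
      Sg_val.2.2.2.2.2.1, Sg_val.2.2.2.2.2.2.1, Sg_val.2.2.2.2.2.2.2,
      Matrix.cons_val_zero, Matrix.cons_val_one, Matrix.cons_val_two, Matrix.tail_cons,
      Matrix.head_cons, Qm, Xm, Nm, Tm, Um, Vm,
      Matrix.cons_val', Matrix.cons_val_fin_one, Matrix.empty_val',
      Matrix.one_apply, Pi.zero_apply, Pi.sub_apply, Pi.add_apply, smul_eq_mul] <;>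
     norm_num <;> ring_nf <;> simp [Complex.I_sq] <;> ring_nf)

lemma check4 : (rho7 0 3 - rho7 1 2).mulVec Sg = 0 := by
  apply funext32; intro a b c
  fin_cases a <;> fin_cases b <;> fin_cases c <;>
    (simp only [r03, r12, Matrix.sub_mulVec, Matrix.add_mulVec, Matrix.smul_mulVec,
      Matrix.mulVec, dotProduct, sum8, tensM, Matrix.of_apply, Fin.prod_univ_three,
      Sg_val.1, Sg_val.2.1, Sg_val.2.2.1, Sg_val.2.2.2.1, Sg_val.2.2.2.2.1,
      Sg_val.2.2.2.2.2.1, Sg_val.2.2.2.2.2.2.1, Sg_val.2.2.2.2.2.2.2,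
      Matrix.cons_val_zero, Matrix.cons_val_one, Matrix.cons_val_two, Matrix.tail_cons,
      Matrix.head_cons, Qm, Xm, Nm, Tm, Um, Vm,
      Matrix.cons_val', Matrix.cons_val_fin_one, Matrix.empty_val',
      Matrix.one_apply, Pi.zero_apply, Pi.sub_apply, Pi.add_apply, smul_eq_mul] <;>
     norm_num <;> ring_nf <;> simp [Complex.I_sq] <;> ring_nf)

lemma check5 : (rho7 0 3 - rho7 4 6).mulVec Sg = 0 := by
  apply funext32; intro a b c
  fin_cases a <;> fin_cases b <;> fin_cases c <;>
    (simp only [r03, r46, Matrix.sub_mulVec, Matrix.add_mulVec, Matrix.smul_mulVec,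
      Matrix.mulVec, dotProduct, sum8, tensM, Matrix.of_apply, Fin.prod_univ_three,
      Sg_val.1, Sg_val.2.1, Sg_val.2.2.1, Sg_val.2.2.2.1, Sg_val.2.2.2.2.1,
      Sg_val.2.2.2.2.2.1, Sg_val.2.2.2.2.2.2.1, Sg_val.2.2.2.2.2.2.2,
      Matrix.cons_val_zero, Matrix.cons_val_one, Matrix.cons_val_two, Matrix.tail_cons,
      Matrix.head_cons, Qm, Xm, Nm, Tm, Um, Vm,
      Matrix.cons_val', Matrix.cons_val_fin_one, Matrix.empty_val',
      Matrix.one_apply, Pi.zero_apply, Pi.sub_apply, Pi.add_apply, smul_eq_mul] <;>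
     norm_num <;> ring_nf <;> simp [Complex.I_sq] <;> ring_nf)

lemma check6 : (rho7 0 4 + rho7 1 5).mulVec Sg = 0 := by
  apply funext32; intro a b c
  fin_cases a <;> fin_cases b <;> fin_cases c <;>
    (simp only [r04, r15, Matrix.sub_mulVec, Matrix.add_mulVec, Matrix.smul_mulVec,
      Matrix.mulVec, dotProduct, sum8, tensM, Matrix.of_apply, Fin.prod_univ_three,
      Sg_val.1, Sg_val.2.1, Sg_val.2.2.1, Sg_val.2.2.2.1, Sg_val.2.2.2.2.1,
      Sg_val.2.2.2.2.2.1, Sg_val.2.2.2.2.2.2.1, Sg_val.2.2.2.2.2.2.2,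
      Matrix.cons_val_zero, Matrix.cons_val_one, Matrix.cons_val_two, Matrix.tail_cons,
      Matrix.head_cons, Qm, Xm, Nm, Tm, Um, Vm,
      Matrix.cons_val', Matrix.cons_val_fin_one, Matrix.empty_val',
      Matrix.one_apply, Pi.zero_apply, Pi.sub_apply, Pi.add_apply, smul_eq_mul] <;>
     norm_num <;> ring_nf <;> simp [Complex.I_sq] <;> ring_nf)

lemma check7 : (rho7 0 4 + rho7 3 6).mulVec Sg = 0 := by
  apply funext32; intro a b c
  fin_cases a <;> fin_cases b <;> fin_cases c <;>
    (simp only [r04, r36, Matrix.sub_mulVec, Matrix.add_mulVec, Matrix.smul_mulVec,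
      Matrix.mulVec, dotProduct, sum8, tensM, Matrix.of_apply, Fin.prod_univ_three,
      Sg_val.1, Sg_val.2.1, Sg_val.2.2.1, Sg_val.2.2.2.1, Sg_val.2.2.2.2.1,
      Sg_val.2.2.2.2.2.1, Sg_val.2.2.2.2.2.2.1, Sg_val.2.2.2.2.2.2.2,
      Matrix.cons_val_zero, Matrix.cons_val_one, Matrix.cons_val_two, Matrix.tail_cons,
      Matrix.head_cons, Qm, Xm, Nm, Tm, Um, Vm,
      Matrix.cons_val', Matrix.cons_val_fin_one, Matrix.empty_val',
      Matrix.one_apply, Pi.zero_apply, Pi.sub_apply, Pi.add_apply, smul_eq_mul] <;>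
     norm_num <;> ring_nf <;> simp [Complex.I_sq] <;> ring_nf)

lemma check8 : (rho7 0 5 - rho7 1 4).mulVec Sg = 0 := by
  apply funext32; intro a b c
  fin_cases a <;> fin_cases b <;> fin_cases c <;>
    (simp only [r05, r14, Matrix.sub_mulVec, Matrix.add_mulVec, Matrix.smul_mulVec,
      Matrix.mulVec, dotProduct, sum8, tensM, Matrix.of_apply, Fin.prod_univ_three,
      Sg_val.1, Sg_val.2.1, Sg_val.2.2.1, Sg_val.2.2.2.1, Sg_val.2.2.2.2.1,
      Sg_val.2.2.2.2.2.1, Sg_val.2.2.2.2.2.2.1, Sg_val.2.2.2.2.2.2.2,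
      Matrix.cons_val_zero, Matrix.cons_val_one, Matrix.cons_val_two, Matrix.tail_cons,
      Matrix.head_cons, Qm, Xm, Nm, Tm, Um, Vm,
      Matrix.cons_val', Matrix.cons_val_fin_one, Matrix.empty_val',
      Matrix.one_apply, Pi.zero_apply, Pi.sub_apply, Pi.add_apply, smul_eq_mul] <;>
     norm_num <;> ring_nf <;> simp [Complex.I_sq] <;> ring_nf)

lemma check9 : (rho7 0 5 + rho7 2 6).mulVec Sg = 0 := by
  apply funext32; intro a b c
  fin_cases a <;> fin_cases b <;> fin_cases c <;>
    (simp only [r05, r26, Matrix.sub_mulVec, Matrix.add_mulVec, Matrix.smul_mulVec,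
      Matrix.mulVec, dotProduct, sum8, tensM, Matrix.of_apply, Fin.prod_univ_three,
      Sg_val.1, Sg_val.2.1, Sg_val.2.2.1, Sg_val.2.2.2.1, Sg_val.2.2.2.2.1,
      Sg_val.2.2.2.2.2.1, Sg_val.2.2.2.2.2.2.1, Sg_val.2.2.2.2.2.2.2,
      Matrix.cons_val_zero, Matrix.cons_val_one, Matrix.cons_val_two, Matrix.tail_cons,
      Matrix.head_cons, Qm, Xm, Nm, Tm, Um, Vm,
      Matrix.cons_val', Matrix.cons_val_fin_one, Matrix.empty_val',
      Matrix.one_apply, Pi.zero_apply, Pi.sub_apply, Pi.add_apply, smul_eq_mul] <;>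
     norm_num <;> ring_nf <;> simp [Complex.I_sq] <;> ring_nf)

lemma check10 : (rho7 0 6 - rho7 2 5).mulVec Sg = 0 := by
  apply funext32; intro a b c
  fin_cases a <;> fin_cases b <;> fin_cases c <;>
    (simp only [r06, r25, Matrix.sub_mulVec, Matrix.add_mulVec, Matrix.smul_mulVec,
      Matrix.mulVec, dotProduct, sum8, tensM, Matrix.of_apply, Fin.prod_univ_three,
      Sg_val.1, Sg_val.2.1, Sg_val.2.2.1, Sg_val.2.2.2.1, Sg_val.2.2.2.2.1,
      Sg_val.2.2.2.2.2.1, Sg_val.2.2.2.2.2.2.1, Sg_val.2.2.2.2.2.2.2,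
      Matrix.cons_val_zero, Matrix.cons_val_one, Matrix.cons_val_two, Matrix.tail_cons,
      Matrix.head_cons, Qm, Xm, Nm, Tm, Um, Vm,
      Matrix.cons_val', Matrix.cons_val_fin_one, Matrix.empty_val',
      Matrix.one_apply, Pi.zero_apply, Pi.sub_apply, Pi.add_apply, smul_eq_mul] <;>
     norm_num <;> ring_nf <;> simp [Complex.I_sq] <;> ring_nf)

lemma check11 : (rho7 0 6 - rho7 3 4).mulVec Sg = 0 := by
  apply funext32; intro a b c
  fin_cases a <;> fin_cases b <;> fin_cases c <;>
    (simp only [r06, r34, Matrix.sub_mulVec, Matrix.add_mulVec, Matrix.smul_mulVec,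
      Matrix.mulVec, dotProduct, sum8, tensM, Matrix.of_apply, Fin.prod_univ_three,
      Sg_val.1, Sg_val.2.1, Sg_val.2.2.1, Sg_val.2.2.2.1, Sg_val.2.2.2.2.1,
      Sg_val.2.2.2.2.2.1, Sg_val.2.2.2.2.2.2.1, Sg_val.2.2.2.2.2.2.2,
      Matrix.cons_val_zero, Matrix.cons_val_one, Matrix.cons_val_two, Matrix.tail_cons,
      Matrix.head_cons, Qm, Xm, Nm, Tm, Um, Vm,
      Matrix.cons_val', Matrix.cons_val_fin_one, Matrix.empty_val',
      Matrix.one_apply, Pi.zero_apply, Pi.sub_apply, Pi.add_apply, smul_eq_mul] <;>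
     norm_num <;> ring_nf <;> simp [Complex.I_sq] <;> ring_nf)

lemma check12 : (rho7 1 6 - rho7 2 4).mulVec Sg = 0 := by
  apply funext32; intro a b c
  fin_cases a <;> fin_cases b <;> fin_cases c <;>
    (simp only [r16, r24, Matrix.sub_mulVec, Matrix.add_mulVec, Matrix.smul_mulVec,
      Matrix.mulVec, dotProduct, sum8, tensM, Matrix.of_apply, Fin.prod_univ_three,
      Sg_val.1, Sg_val.2.1, Sg_val.2.2.1, Sg_val.2.2.2.1, Sg_val.2.2.2.2.1,
      Sg_val.2.2.2.2.2.1, Sg_val.2.2.2.2.2.2.1, Sg_val.2.2.2.2.2.2.2,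
      Matrix.cons_val_zero, Matrix.cons_val_one, Matrix.cons_val_two, Matrix.tail_cons,
      Matrix.head_cons, Qm, Xm, Nm, Tm, Um, Vm,
      Matrix.cons_val', Matrix.cons_val_fin_one, Matrix.empty_val',
      Matrix.one_apply, Pi.zero_apply, Pi.sub_apply, Pi.add_apply, smul_eq_mul] <;>
     norm_num <;> ring_nf <;> simp [Complex.I_sq] <;> ring_nf)

lemma check13 : (rho7 1 6 + rho7 3 5).mulVec Sg = 0 := by
  apply funext32; intro a b c
  fin_cases a <;> fin_cases b <;> fin_cases c <;>
    (simp only [r16, r35, Matrix.sub_mulVec, Matrix.add_mulVec, Matrix.smul_mulVec,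
      Matrix.mulVec, dotProduct, sum8, tensM, Matrix.of_apply, Fin.prod_univ_three,
      Sg_val.1, Sg_val.2.1, Sg_val.2.2.1, Sg_val.2.2.2.1, Sg_val.2.2.2.2.1,
      Sg_val.2.2.2.2.2.1, Sg_val.2.2.2.2.2.2.1, Sg_val.2.2.2.2.2.2.2,
      Matrix.cons_val_zero, Matrix.cons_val_one, Matrix.cons_val_two, Matrix.tail_cons,
      Matrix.head_cons, Qm, Xm, Nm, Tm, Um, Vm,
      Matrix.cons_val', Matrix.cons_val_fin_one, Matrix.empty_val',
      Matrix.one_apply, Pi.zero_apply, Pi.sub_apply, Pi.add_apply, smul_eq_mul] <;>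
     norm_num <;> ring_nf <;> simp [Complex.I_sq] <;> ring_nf)

lemma I3 : Complex.I ^ 3 = -Complex.I := by
  rw [pow_succ, Complex.I_sq]; ring

lemma phi_eq : phiG2 = ((((Real.sqrt 2 : ℝ) : ℂ))⁻¹ ^ 3 * (1 + Complex.I)) • Sg := by
  apply funext32; intro a b c
  fin_cases a <;> fin_cases b <;> fin_cases c <;>
    (simp [phiG2, uB, uvec, Sg, Fin.prod_univ_three, Pi.add_apply, Pi.smul_apply,
      smul_eq_mul, Matrix.cons_val_zero, Matrix.cons_val_one, Matrix.cons_val_two,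
      Matrix.tail_cons, Matrix.head_cons] <;> ring_nf <;> simp [Complex.I_sq, I3] <;> ring_nf)

lemma c0_ne : ((((Real.sqrt 2 : ℝ) : ℂ))⁻¹ ^ 3 * (1 + Complex.I)) ≠ 0 := by
  apply mul_ne_zero
  · exact pow_ne_zero _ (inv_ne_zero (Complex.ofReal_ne_zero.mpr
      (ne_of_gt (Real.sqrt_pos.mpr (by norm_num)))))
  · intro h
    simpa using congrArg Complex.im h

/-- the space of vectors of (ℂ²)^{⊗3} annihilated by the spin
representation of g₂ ⊂ so(7) is exactly the one-dimensional span of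
φ = u(1,1,1) + i·u(-1,-1,-1). -/
theorem stmt15 :
    {v : (Fin 3 → Fin 2) → ℂ | ∀ A ∈ g2ops, A.mulVec v = 0} =
    ↑(Submodule.span ℂ ({phiG2} : Set ((Fin 3 → Fin 2) → ℂ))) := by
  ext v
  simp only [Set.mem_setOf_eq, SetLike.mem_coe, Submodule.mem_span_singleton]
  constructor
  · intro h
    have H0 := h _ (show rho7 0 1 - rho7 2 3 ∈ g2ops from by simp [g2ops])
    have H1 := h _ (show rho7 0 1 - rho7 4 5 ∈ g2ops from by simp [g2ops])
    have H3 := h _ (show rho7 0 2 - rho7 5 6 ∈ g2ops from by simp [g2ops])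
    have e00 := congrFun H0 ![0,0,0]
    have e01 := congrFun H0 ![0,0,1]
    have e02 := congrFun H0 ![0,1,0]
    have e03 := congrFun H0 ![0,1,1]
    have e10 := congrFun H1 ![0,0,0]
    have e11 := congrFun H1 ![0,0,1]
    have e30 := congrFun H3 ![0,0,0]
    simp only [r01, r23, r45, r02, r56, Matrix.sub_mulVec, Matrix.smul_mulVec,
      Matrix.mulVec, dotProduct, sum8, tensM, Matrix.of_apply, Fin.prod_univ_three,
      Matrix.cons_val_zero, Matrix.cons_val_one, Matrix.cons_val_two, Matrix.tail_cons,
      Matrix.head_cons, Qm, Xm, Nm, Tm, Um, Vm,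
      Matrix.cons_val', Matrix.cons_val_fin_one, Matrix.empty_val',
      Matrix.one_apply, Pi.zero_apply, Pi.sub_apply, smul_eq_mul,
      if_true, if_false, Matrix.cons_val] at e00 e01 e02 e03 e10 e11 e30
    simp at e00 e01 e02 e03 e10 e11 e30
    have r100 : v ![1,0,0] = -v ![0,0,0] := by
      linear_combination (-2*Complex.I) * e30 + (v ![0,0,0] + v ![1,0,0]) * Complex.I_sq
    have r010 : v ![0,1,0] = -v ![0,0,0] := by linear_combination 2 * e00 + r100
    have r001 : v ![0,0,1] = -v ![0,0,0] := by linear_combination 2 * e10 + r100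
    have r101 : v ![1,0,1] = -v ![0,0,0] := by linear_combination -2 * e11
    have r110 : v ![1,1,0] = -v ![0,0,0] := by linear_combination -2 * e02
    have r111 : v ![1,1,1] = v ![0,0,0] := by linear_combination -2 * e03 - r001
    have r011 : v ![0,1,1] = -v ![0,0,0] := by linear_combination 2 * e01 + r101
    refine ⟨v ![0,0,0] * ((((Real.sqrt 2 : ℝ) : ℂ))⁻¹ ^ 3 * (1 + Complex.I))⁻¹, ?_⟩
    rw [phi_eq, smul_smul, mul_assoc, inv_mul_cancel₀ c0_ne, mul_one]
    apply funext32; intro a b c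
    fin_cases a <;> fin_cases b <;> fin_cases c <;>
      simp only [Fin.mk_zero, Fin.mk_one, Fin.isValue, Pi.smul_apply, smul_eq_mul, Sg_val.1, Sg_val.2.1, Sg_val.2.2.1,
        Sg_val.2.2.2.1, Sg_val.2.2.2.2.1, Sg_val.2.2.2.2.2.1, Sg_val.2.2.2.2.2.2.1,
        Sg_val.2.2.2.2.2.2.2]
    · ring
    · linear_combination -r001
    · linear_combination -r010
    · linear_combination -r011
    · linear_combination -r100
    · linear_combination -r101
    · linear_combination -r110
    · linear_combination -r111
  · rintro ⟨a, rfl⟩ A hA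
    rw [phi_eq]
    fin_cases hA <;>
      simp [Matrix.mulVec_smul, check0, check1, check2, check3, check4, check5, check6,
        check7, check8, check9, check10, check11, check12, check13]
end
end

section
/- The spinor ψ = u(1,-1,-1,1) - u(-1,1,1,-1) ∈ (ℂ²)^{⊗4} lies in the positive half-spinor module Δ₈⁺ and is annihilated by the 21-dimensional Lie algebra spin(7) ⊂ so(8) spanned by the 24 listed elements E₁₂+E₃₄, E₁₃-E₂₄, E₁₄+E₂₃, E₅₆+E₇₈, -E₅₇+E₆₈, E₅₈+E₆₇, -E₁₅+E₂₆, E₁₂+E₅₆, E₁₆+E₂₅, E₃₇-E₄₈, E₃₄+E₇₈, E₃₈+E₄₇, E₁₂-E₇₈, E₁₇+E₂₈, E₁₈-E₂₇, E₃₄-E₅₆, E₃₅+E₄₆, E₃₆-E₄₅, E₁₈+E₃₆, E₁₇+E₃₅, E₂₆-E₄₈, E₂₅+E₃₈, E₂₃+E₆₇, E₂₄+E₅₇, acting via E_{ij} ↦ (1/2)Φ(e_i)Φ(e_j). -/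
open Complex Matrix BigOperators

noncomputable section

/-- The Clifford representation Φ of Cl(8) on (ℂ²)^{⊗4} (all κ_j = 1), zero-based. -/
def Phi8 (j : Fin 8) : Matrix (Fin 4 → Fin 2) (Fin 4 → Fin 2) ℂ :=
  PhiEven 4 (fun _ => 1) ⟨(j : ℕ), by have := j.isLt; omega⟩

/-- ρ(E_{ij}) = (1/2)·Φ(e_i)·Φ(e_j), zero-based indices. -/
def rho8 (i j : Fin 8) : Matrix (Fin 4 → Fin 2) (Fin 4 → Fin 2) ℂ :=
  (2⁻¹ : ℂ) • (Phi8 i * Phi8 j)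

/-- The spin-representation images of the 24 listed spanning elements of
spin(7) ⊂ so(8) (translated to zero-based indices). -/
def spin7ops : List (Matrix (Fin 4 → Fin 2) (Fin 4 → Fin 2) ℂ) :=
  [rho8 0 1 + rho8 2 3, rho8 0 2 - rho8 1 3, rho8 0 3 + rho8 1 2,
   rho8 4 5 + rho8 6 7, -rho8 4 6 + rho8 5 7, rho8 4 7 + rho8 5 6,
   -rho8 0 4 + rho8 1 5, rho8 0 1 + rho8 4 5, rho8 0 5 + rho8 1 4,
   rho8 2 6 - rho8 3 7, rho8 2 3 + rho8 6 7, rho8 2 7 + rho8 3 6,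
   rho8 0 1 - rho8 6 7, rho8 0 6 + rho8 1 7, rho8 0 7 - rho8 1 6,
   rho8 2 3 - rho8 4 5, rho8 2 4 + rho8 3 5, rho8 2 5 - rho8 3 4,
   rho8 0 7 + rho8 2 5, rho8 0 6 + rho8 2 4, rho8 1 5 - rho8 3 7,
   rho8 1 4 + rho8 2 7, rho8 1 2 + rho8 5 6, rho8 1 3 + rho8 4 6]

/-- The spinor ψ = u(1,-1,-1,1) - u(-1,1,1,-1) ∈ (ℂ²)^{⊗4}
(the argument of uB lists (ε₁,ε₂,ε₃,ε₄), with ε₁ the rightmost tensor factor). -/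
def psiSpin7 : (Fin 4 → Fin 2) → ℂ :=
  uB (![1, -1, -1, 1] : Fin 4 → ℂ) - uB (![-1, 1, 1, -1] : Fin 4 → ℂ)

lemma tensM_mulVec {m : ℕ} (M : Fin m → Matrix (Fin 2) (Fin 2) ℂ)
    (v : Fin m → Fin 2 → ℂ) :
    (tensM M).mulVec (fun x => ∏ i, v i (x i)) =
      fun x => ∏ i, (M i).mulVec (v i) (x i) := by
  funext x
  have : ∀ i (s : Fin 2), (M i).mulVec (v i) s = ∑ t, M i s t * v i t := by
    intro i s; simp [Matrix.mulVec, dotProduct]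
  simp only [this]
  rw [Finset.prod_univ_sum]
  simp only [Fintype.piFinset_univ]
  simp [Matrix.mulVec, dotProduct, tensM, Finset.prod_mul_distrib]

lemma E2_mv (w : Fin 2 → ℂ) : E2.mulVec w = w := by
  simp [E2]

lemma Tm_mv (e : ℂ) (h : e * e = 1) :
    Tm.mulVec (uvec e) = (-e) • uvec e := by
  funext s
  fin_cases s <;>
      simp [Tm, uvec, Matrix.mulVec, dotProduct, Fin.sum_univ_two] <;> ring_nf
  · linear_combination ((Real.sqrt 2 : ℝ) : ℂ)⁻¹ * e * Complex.I_sq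
  · linear_combination (-(Complex.I * ((Real.sqrt 2 : ℝ) : ℂ)⁻¹)) * h

lemma Um_mv (e : ℂ) : Um.mulVec (uvec e) = Complex.I • uvec (-e) := by
  funext s
  fin_cases s <;>
    simp [Um, uvec, Matrix.mulVec, dotProduct, Fin.sum_univ_two]

lemma Vm_mv (e : ℂ) (h : e * e = 1) :
    Vm.mulVec (uvec e) = e • uvec (-e) := by
  funext s
  fin_cases s <;>
      simp [Vm, uvec, Matrix.mulVec, dotProduct, Fin.sum_univ_two] <;> ring_nf
  · linear_combination (-(((Real.sqrt 2 : ℝ) : ℂ)⁻¹ * e)) * Complex.I_sq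
  · linear_combination (-(Complex.I * ((Real.sqrt 2 : ℝ) : ℂ)⁻¹)) * h

def kof (j : Fin 8) : Fin 4 := ⟨(j : ℕ)/2, by have := j.isLt; omega⟩

def cphi (j : Fin 8) (ε : Fin 4 → ℂ) : ℂ :=
  (if (j : ℕ) % 2 = 0 then Complex.I else ε (kof j)) *
    ∏ i : Fin 4, (if (i : ℕ) < (j : ℕ)/2 then -ε i else 1)

lemma phi_act (j : Fin 8) (ε : Fin 4 → ℂ) (hε : ∀ i, ε i * ε i = 1) :
    (Phi8 j).mulVec (uB ε) =
      cphi j ε • uB (Function.update ε (kof j) (-ε (kof j))) := by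
  have hu : uB ε = fun x => ∏ i, uvec (ε i) (x i) := rfl
  rw [Phi8, PhiEven]
  norm_num
  rw [hu, tensM_mulVec]
  funext x
  simp only [Pi.smul_apply, smul_eq_mul]
  have hT : ∀ k, Tm.mulVec (uvec (ε k)) = (-ε k) • uvec (ε k) := fun k => Tm_mv _ (hε k)
  have hV : ∀ k, Vm.mulVec (uvec (ε k)) = (ε k) • uvec (-ε k) := fun k => Vm_mv _ (hε k)
  fin_cases j <;>
    · simp only [cphi, kof, uB, Fin.prod_univ_four]
      simp (config := { decide := true }) only [hT, hV, Um_mv, E2_mv, Pi.smul_apply,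
        smul_eq_mul, Function.update, Fin.isValue, mul_ite, ite_mul, dif_pos, dif_neg,
        eq_rec_constant, dite_eq_ite, if_true, if_false, mul_one, one_mul,
        show (⟨0, by omega⟩ : Fin 4) = 0 from rfl, show (⟨1, by omega⟩ : Fin 4) = 1 from rfl,
        show (⟨2, by omega⟩ : Fin 4) = 2 from rfl, show (⟨3, by omega⟩ : Fin 4) = 3 from rfl]
      ring

lemma hε_upd (ε : Fin 4 → ℂ) (hε : ∀ i, ε i * ε i = 1) (k : Fin 4) :
    ∀ i, Function.update ε k (-ε k) i * Function.update ε k (-ε k) i = 1 := by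
  intro i
  rcases eq_or_ne i k with h | h
  · subst h; simp [Function.update_self]; linear_combination hε i
  · simp [Function.update_of_ne h]; exact hε i

lemma rho_act (a b : Fin 8) (ε : Fin 4 → ℂ) (hε : ∀ i, ε i * ε i = 1) :
    (rho8 a b).mulVec (uB ε) =
      (2⁻¹ * cphi b ε * cphi a (Function.update ε (kof b) (-ε (kof b)))) •
        uB (Function.update (Function.update ε (kof b) (-ε (kof b))) (kof a)
              (-(Function.update ε (kof b) (-ε (kof b))) (kof a))) := by
  rw [rho8, Matrix.smul_mulVec, ← Matrix.mulVec_mulVec,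
    phi_act b ε hε, Matrix.mulVec_smul, phi_act a _ (hε_upd ε hε (kof b)),
    smul_smul, smul_smul]

lemma hε1 : ∀ i, (![1, -1, -1, 1] : Fin 4 → ℂ) i * (![1, -1, -1, 1] : Fin 4 → ℂ) i = 1 := by
  intro i; fin_cases i <;> norm_num

lemma hε2 : ∀ i, (![-1, 1, 1, -1] : Fin 4 → ℂ) i * (![-1, 1, 1, -1] : Fin 4 → ℂ) i = 1 := by
  intro i; fin_cases i <;> norm_num

lemma upd_cons (a b c d v : ℂ) :
    (Function.update (![a,b,c,d] : Fin 4 → ℂ) 0 v = ![v,b,c,d]) ∧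
    (Function.update (![a,b,c,d] : Fin 4 → ℂ) 1 v = ![a,v,c,d]) ∧
    (Function.update (![a,b,c,d] : Fin 4 → ℂ) 2 v = ![a,b,v,d]) ∧
    (Function.update (![a,b,c,d] : Fin 4 → ℂ) 3 v = ![a,b,c,v]) := by
  refine ⟨?_, ?_, ?_, ?_⟩ <;> (funext i; fin_cases i <;> simp [Function.update])

lemma kof0 : kof 0 = 0 := rfl

lemma kof1 : kof 1 = 0 := rfl

lemma kof2 : kof 2 = 1 := rfl

lemma kof3 : kof 3 = 1 := rfl

lemma kof4 : kof 4 = 2 := rfl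

lemma kof5 : kof 5 = 2 := rfl

lemma kof6 : kof 6 = 3 := rfl

lemma kof7 : kof 7 = 3 := rfl

lemma cphi0 (ε : Fin 4 → ℂ) : cphi 0 ε = Complex.I := by
  simp [cphi, kof0, Fin.prod_univ_four, show (((0:Fin 8)):ℕ) = 0 from rfl, show (((0:Fin 4)):ℕ) = 0 from rfl,
    show (((1:Fin 4)):ℕ) = 1 from rfl, show (((2:Fin 4)):ℕ) = 2 from rfl,
    show (((3:Fin 4)):ℕ) = 3 from rfl]

lemma cphi1 (ε : Fin 4 → ℂ) : cphi 1 ε = ε 0 := by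
  simp [cphi, kof1, Fin.prod_univ_four, show (((1:Fin 8)):ℕ) = 1 from rfl, show (((0:Fin 4)):ℕ) = 0 from rfl,
    show (((1:Fin 4)):ℕ) = 1 from rfl, show (((2:Fin 4)):ℕ) = 2 from rfl,
    show (((3:Fin 4)):ℕ) = 3 from rfl]

lemma cphi2 (ε : Fin 4 → ℂ) : cphi 2 ε = -(Complex.I * ε 0) := by
  simp [cphi, kof2, Fin.prod_univ_four, show (((2:Fin 8)):ℕ) = 2 from rfl, show (((0:Fin 4)):ℕ) = 0 from rfl,
    show (((1:Fin 4)):ℕ) = 1 from rfl, show (((2:Fin 4)):ℕ) = 2 from rfl,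
    show (((3:Fin 4)):ℕ) = 3 from rfl]; try ring

lemma cphi3 (ε : Fin 4 → ℂ) : cphi 3 ε = -(ε 1 * ε 0) := by
  simp [cphi, kof3, Fin.prod_univ_four, show (((3:Fin 8)):ℕ) = 3 from rfl, show (((0:Fin 4)):ℕ) = 0 from rfl,
    show (((1:Fin 4)):ℕ) = 1 from rfl, show (((2:Fin 4)):ℕ) = 2 from rfl,
    show (((3:Fin 4)):ℕ) = 3 from rfl]; try ring

lemma cphi4 (ε : Fin 4 → ℂ) : cphi 4 ε = Complex.I * ε 0 * ε 1 := by
  simp [cphi, kof4, Fin.prod_univ_four, show (((4:Fin 8)):ℕ) = 4 from rfl, show (((0:Fin 4)):ℕ) = 0 from rfl,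
    show (((1:Fin 4)):ℕ) = 1 from rfl, show (((2:Fin 4)):ℕ) = 2 from rfl,
    show (((3:Fin 4)):ℕ) = 3 from rfl]; try ring

lemma cphi5 (ε : Fin 4 → ℂ) : cphi 5 ε = ε 2 * ε 0 * ε 1 := by
  simp [cphi, kof5, Fin.prod_univ_four, show (((5:Fin 8)):ℕ) = 5 from rfl, show (((0:Fin 4)):ℕ) = 0 from rfl,
    show (((1:Fin 4)):ℕ) = 1 from rfl, show (((2:Fin 4)):ℕ) = 2 from rfl,
    show (((3:Fin 4)):ℕ) = 3 from rfl]; try ring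

lemma cphi6 (ε : Fin 4 → ℂ) : cphi 6 ε = -(Complex.I * ε 0 * ε 1 * ε 2) := by
  simp [cphi, kof6, Fin.prod_univ_four, show (((6:Fin 8)):ℕ) = 6 from rfl, show (((0:Fin 4)):ℕ) = 0 from rfl,
    show (((1:Fin 4)):ℕ) = 1 from rfl, show (((2:Fin 4)):ℕ) = 2 from rfl,
    show (((3:Fin 4)):ℕ) = 3 from rfl]; try ring

lemma cphi7 (ε : Fin 4 → ℂ) : cphi 7 ε = -(ε 3 * ε 0 * ε 1 * ε 2) := by
  simp [cphi, kof7, Fin.prod_univ_four, show (((7:Fin 8)):ℕ) = 7 from rfl, show (((0:Fin 4)):ℕ) = 0 from rfl,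
    show (((1:Fin 4)):ℕ) = 1 from rfl, show (((2:Fin 4)):ℕ) = 2 from rfl,
    show (((3:Fin 4)):ℕ) = 3 from rfl]; try ring

-- test one op

/-- ψ = u(1,-1,-1,1) - u(-1,1,1,-1) lies in the positive half-spinor
module Δ₈⁺ and is annihilated by the 21-dimensional Lie algebra spin(7) ⊂ so(8)
(spanned by the 24 listed elements), acting via E_{ij} ↦ (1/2)Φ(e_i)Φ(e_j). -/
theorem stmt16 :
    psiSpin7 ∈ Dplus 4 ∧ ∀ A ∈ spin7ops, A.mulVec psiSpin7 = 0 := by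
  constructor
  · refine sub_mem (Submodule.subset_span ?_) (Submodule.subset_span ?_)
    · exact ⟨![1,-1,-1,1], fun j => by fin_cases j <;> norm_num,
        by simp [Fin.prod_univ_four], rfl⟩
    · exact ⟨![-1,1,1,-1], fun j => by fin_cases j <;> norm_num,
        by simp [Fin.prod_univ_four], rfl⟩
  · intro A hA
    have R1 := fun a b => rho_act a b _ hε1
    have R2 := fun a b => rho_act a b _ hε2
    simp only [spin7ops, List.mem_cons, List.not_mem_nil, or_false] at hA
    rcases hA with h|h|h|h|h|h|h|h|h|h|h|h|h|h|h|h|h|h|h|h|h|h|h|h <;> subst h <;>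
    · simp only [psiSpin7, Matrix.add_mulVec, Matrix.sub_mulVec, Matrix.neg_mulVec,
        Matrix.mulVec_sub, R1, R2, kof0, kof1, kof2, kof3, kof4, kof5, kof6, kof7,
        cphi0, cphi1, cphi2, cphi3, cphi4, cphi5, cphi6, cphi7]
      norm_num [(upd_cons _ _ _ _ _).1, (upd_cons _ _ _ _ _).2.1, (upd_cons _ _ _ _ _).2.2.1,
        (upd_cons _ _ _ _ _).2.2.2, Matrix.cons_val_zero, Matrix.cons_val_one, Matrix.head_cons,
        Matrix.cons_val, Matrix.cons_val_two, Matrix.tail_cons,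
        show ∀ a b c d : ℂ, (![a,b,c,d] : Fin 4 → ℂ) 3 = d from fun _ _ _ _ => rfl,
        Complex.I_mul_I, mul_assoc]
      try module
end
end
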